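/- Let F = ℚ(i), let L/F be a cyclic Galois extension of degree n with Galois group generated by σ, and let π ∈ ℤ[i] be a prime with σ-invariant prime ideal (π)𝒪_L that is prime in 𝒪_L (π inert in L/F), and π̄ its conjugate, also inert, with (π) ≠ (π̄). If γ = π/π̄ satisfies γ^k = N_{L/F}(ℓ) for some ℓ ∈ Lˣ and k ≥ 1, then n divides k. -/

import Mathlib

open NumberField

noncomputable abbrev QadjI : Type := FractionRing GaussianInt

set_option maxHeartbeats 1000000 in
set_option synthInstance.maxHeartbeats 1000000 in
theorem norm_eq_gamma_pow_implies_n_dvd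
    (L : Type*) [Field L] [Algebra QadjI L] [FiniteDimensional QadjI L]
    [IsGalois QadjI L] [Algebra GaussianInt L] [IsScalarTower GaussianInt QadjI L]
    (n : ℕ) (hn : Module.finrank QadjI L = n)
    (hcyc : IsCyclic (L ≃ₐ[QadjI] L))
    (π : GaussianInt) (hπ : Prime π)
    (hinert : Prime ((algebraMap GaussianInt (integralClosure GaussianInt L)) π))
    (hinert' : Prime ((algebraMap GaussianInt (integralClosure GaussianInt L)) (star π)))
    (hne : Ideal.span {(algebraMap GaussianInt (integralClosure GaussianInt L)) π} ≠
           Ideal.span {(algebraMap GaussianInt (integralClosure GaussianInt L)) (star π)})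
    (γ : QadjI)
    (hγ : γ = algebraMap GaussianInt QadjI π / algebraMap GaussianInt QadjI (star π))
    (k : ℕ) (hk : 1 ≤ k) (ℓ : L) (hℓ : Algebra.norm QadjI ℓ = γ ^ k) :
    n ∣ k := by
  classical
  set O := integralClosure GaussianInt L with hO
  set π' : O := algebraMap GaussianInt O π with hπ'def
  set πb' : O := algebraMap GaussianInt O (star π) with hπb'def
  have hπ0 : π ≠ 0 := hπ.ne_zero
  have hπb0 : star π ≠ 0 := star_ne_zero.mpr hπ0
  have hKinj : Function.Injective (algebraMap GaussianInt QadjI) :=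
    IsFractionRing.injective _ _
  have hLinj : Function.Injective (algebraMap QadjI L) := (algebraMap QadjI L).injective
  have hRLinj : Function.Injective (algebraMap GaussianInt L) := by
    rw [IsScalarTower.algebraMap_eq GaussianInt QadjI L]
    exact hLinj.comp hKinj
  have hπK0 : algebraMap GaussianInt QadjI π ≠ 0 := fun h => hπ0 (hKinj (by simpa using h))
  have hπbK0 : algebraMap GaussianInt QadjI (star π) ≠ 0 :=
    fun h => hπb0 (hKinj (by simpa using h))
  have hγ0 : γ ≠ 0 := by rw [hγ]; exact div_ne_zero hπK0 hπbK0
  have hℓ0 : ℓ ≠ 0 := by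
    intro h
    apply pow_ne_zero k hγ0
    rw [← hℓ, h, Algebra.norm_zero]
  haveI : Algebra.IsAlgebraic QadjI L := Algebra.IsAlgebraic.of_finite _ _
  have halg : IsAlgebraic GaussianInt ℓ :=
    (IsFractionRing.isAlgebraic_iff GaussianInt QadjI L).mpr (Algebra.IsAlgebraic.isAlgebraic ℓ)
  obtain ⟨a, y, hy0, hya⟩ : ∃ (a : integralClosure GaussianInt L) (y : GaussianInt),
      y ≠ 0 ∧ algebraMap GaussianInt L y * ℓ = a := by
    obtain ⟨y, hy0, hint⟩ := halg.exists_integral_multiple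
    exact ⟨⟨y • ℓ, hint⟩, y, hy0, (Algebra.smul_def y ℓ).symm⟩
  -- equation in QadjI
  have hnormy : Algebra.norm QadjI (algebraMap GaussianInt L y)
      = (algebraMap GaussianInt QadjI y) ^ n := by
    rw [IsScalarTower.algebraMap_apply GaussianInt QadjI L, Algebra.norm_algebraMap, hn]
  have hEK : (algebraMap GaussianInt QadjI y) ^ n * (algebraMap GaussianInt QadjI π) ^ k
      = (algebraMap GaussianInt QadjI (star π)) ^ k * Algebra.norm QadjI (a : L) := by
    have h1 : Algebra.norm QadjI (algebraMap GaussianInt L y * ℓ)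
        = Algebra.norm QadjI (a : L) := by rw [hya]
    rw [map_mul, hnormy, hℓ, hγ, div_pow] at h1
    field_simp at h1
    linear_combination h1
  -- map into L
  have hEL : (algebraMap GaussianInt L y) ^ n * (algebraMap GaussianInt L π) ^ k
      = (algebraMap GaussianInt L (star π)) ^ k * ∏ σ : L ≃ₐ[QadjI] L, σ (a : L) := by
    have h2 := congrArg (algebraMap QadjI L) hEK
    simp only [map_mul, map_pow, Algebra.norm_eq_prod_automorphisms,
      ← IsScalarTower.algebraMap_apply GaussianInt QadjI L] at h2
    exact h2
  -- descend to O
  have hOLinj : Function.Injective (algebraMap O L) :=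
    IsIntegralClosure.algebraMap_injective O GaussianInt L
  have key : (algebraMap GaussianInt O y) ^ n * π' ^ k
      = πb' ^ k * ∏ σ : L ≃ₐ[QadjI] L, galRestrict GaussianInt QadjI L O σ a := by
    apply hOLinj
    rw [map_mul, map_mul, map_pow, map_pow, map_pow, map_prod]
    simp only [algebraMap_galRestrict_apply, hπ'def, hπb'def,
      ← IsScalarTower.algebraMap_apply GaussianInt O L]
    exact hEL
  -- nonvanishing
  have hROinj : Function.Injective (algebraMap GaussianInt O) := fun u v h => by
    apply hRLinj
    rw [IsScalarTower.algebraMap_apply GaussianInt O L, h,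
      ← IsScalarTower.algebraMap_apply GaussianInt O L]
  have hy'0 : algebraMap GaussianInt O y ≠ 0 :=
    fun h => hy0 (hROinj (by rw [h, map_zero]))
  have haL : (a : L) ≠ 0 := by
    rw [← hya]
    exact mul_ne_zero (fun h => hy0 (hRLinj (by rw [h, map_zero]))) hℓ0
  have ha0 : a ≠ 0 := fun h => haL (by rw [h]; simp)
  -- multiplicity bookkeeping
  haveI : IsNoetherianRing O := IsIntegralClosure.isNoetherianRing GaussianInt QadjI L O
  have hπ'fin : FiniteMultiplicity π' π' :=
    FiniteMultiplicity.of_not_isUnit hinert.not_unit hinert.ne_zero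
  have finy : FiniteMultiplicity π' (algebraMap GaussianInt O y) :=
    FiniteMultiplicity.of_not_isUnit hinert.not_unit hy'0
  have fina : FiniteMultiplicity π' a :=
    FiniteMultiplicity.of_not_isUnit hinert.not_unit ha0
  have hndvd : ¬ π' ∣ πb' := by
    intro hdvd
    obtain ⟨c, hc⟩ := hdvd
    rcases hinert'.irreducible.isUnit_or_isUnit hc with h | h
    · exact hinert.not_unit h
    · refine hne (Ideal.span_singleton_eq_span_singleton.mpr ⟨h.unit, ?_⟩)
      rw [IsUnit.unit_spec, ← hc]
  set ma : ℕ := multiplicity π' a with hma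
  set mb : ℕ := multiplicity π' (algebraMap GaussianInt O y) with hmb
  have hsum : ∑ σ : L ≃ₐ[QadjI] L,
      emultiplicity π' (galRestrict GaussianInt QadjI L O σ a) = (n : ℕ∞) * ma := by
    have h1 : ∀ σ : L ≃ₐ[QadjI] L,
        emultiplicity π' (galRestrict GaussianInt QadjI L O σ a) = (ma : ℕ∞) := by
      intro σ
      conv_lhs => rw [show π' = galRestrict GaussianInt QadjI L O σ π' from
        ((galRestrict GaussianInt QadjI L O σ).commutes π).symm]
      rw [emultiplicity_map_eq, fina.emultiplicity_eq_multiplicity]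
    rw [Finset.sum_congr rfl (fun σ _ => h1 σ), Finset.sum_const, Finset.card_univ,
      ← Nat.card_eq_fintype_card, IsGalois.card_aut_eq_finrank, hn, nsmul_eq_mul]
  have hE := congrArg (emultiplicity π') key
  rw [emultiplicity_mul hinert, emultiplicity_mul hinert, emultiplicity_pow hinert,
    emultiplicity_pow hinert, emultiplicity_pow hinert, hπ'fin.emultiplicity_self,
    emultiplicity_eq_zero.mpr hndvd, Finset.emultiplicity_prod hinert, hsum,
    finy.emultiplicity_eq_multiplicity, ← hmb] at hE
  have hnat : n * mb + k = n * ma := by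
    simp only [mul_one, mul_zero, zero_add] at hE
    exact_mod_cast hE
  have hkeq : k = n * ma - n * mb := by omega
  rw [hkeq]
  exact Nat.dvd_sub ⟨ma, rfl⟩ ⟨mb, rfl⟩
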